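/- arXiv:2510.15326 — 2 statements merged into one kernel-verified Lean document; each statement's English description precedes it below -/
import Mathlib

section
/- Let Ω ⊆ ℂ be open, let u : Ω → ℝ and β : Ω → ℝ be smooth with β > 0 on Ω, let α : Ω → ℂ be holomorphic and nowhere vanishing, and suppose e^{2u} = |α|² + β² and (1/2)ᾱ α_z + β β_z − u_z e^{2u} = 0 on Ω. Define Ĉ := (1/2) e^{−u} β, so that 0 < Ĉ < 1/2 on Ω. Then the equation u_{zz̄} e^u β² − (1/4)|α_z|² e^u − |u_z|² e^u |α|² + (1/2)α_z u_z̄ e^u ᾱ + (1/2)(ᾱ)_z̄ u_z e^u α + 2β⁴ = 0 holds on Ω if and only if u_{zz̄} + 8 e^u Ĉ² − 4|Ĉ_z|²/(1 − 4Ĉ²) = 0 holds on Ω. -/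
open Complex ComplexConjugate

/-- Wirtinger derivative `g_z = (∂ₓg - i ∂_y g)/2`. -/
noncomputable def wderivZ (g : ℂ → ℂ) (w : ℂ) : ℂ :=
  (fderiv ℝ g w 1 - Complex.I * fderiv ℝ g w Complex.I) / 2

/-- Wirtinger derivative `g_z̄ = (∂ₓg + i ∂_y g)/2`. -/
noncomputable def wderivZbar (g : ℂ → ℂ) (w : ℂ) : ℂ :=
  (fderiv ℝ g w 1 + Complex.I * fderiv ℝ g w Complex.I) / 2

lemma fderiv_ofReal_comp (f : ℂ → ℝ) (w v : ℂ) (hf : DifferentiableAt ℝ f w) :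
    fderiv ℝ (fun z => ((f z : ℝ) : ℂ)) w v = ((fderiv ℝ f w v : ℝ) : ℂ) := by
  have h : (fun z => ((f z : ℝ) : ℂ)) = Complex.ofRealCLM ∘ f := rfl
  rw [h, fderiv_comp w Complex.ofRealCLM.differentiableAt hf]
  simp

lemma fderiv_conj_comp (g : ℂ → ℂ) (w v : ℂ) :
    fderiv ℝ (fun z => conj (g z)) w v = conj (fderiv ℝ g w v) := by
  have h : (fun z => conj (g z)) = Complex.conjCLE ∘ g := rfl
  rw [h, ContinuousLinearEquiv.comp_fderiv]
  simp

lemma wderivZbar_conj (g : ℂ → ℂ) (w : ℂ) :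
    wderivZbar (fun z => conj (g z)) w = conj (wderivZ g w) := by
  unfold wderivZ wderivZbar
  rw [fderiv_conj_comp, fderiv_conj_comp]
  rw [map_div₀, map_sub, map_mul, Complex.conj_I]
  simp [map_ofNat]

lemma abs_sq_eq (z : ℂ) : ((‖z‖ : ℝ) : ℂ)^2 = z * conj z := by
  rw [Complex.mul_conj]
  norm_cast
  exact Complex.sq_norm z

lemma wderivZbar_ofReal (f : ℂ → ℝ) (w : ℂ) (hf : DifferentiableAt ℝ f w) :
    wderivZbar (fun z => (f z : ℂ)) w = conj (wderivZ (fun z => (f z : ℂ)) w) := by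
  unfold wderivZ wderivZbar
  rw [fderiv_ofReal_comp _ _ _ hf, fderiv_ofReal_comp _ _ _ hf]
  rw [map_div₀, map_sub, map_mul, Complex.conj_I, Complex.conj_ofReal, Complex.conj_ofReal]
  simp [map_ofNat]

lemma wderivZ_chat (u β : ℂ → ℝ) (w : ℂ)
    (hu : DifferentiableAt ℝ u w) (hb : DifferentiableAt ℝ β w) :
    wderivZ (fun z => (((1 / 2 : ℝ) * Real.exp (-u z) * β z : ℝ) : ℂ)) w
      = (((1 / 2 : ℝ) * Real.exp (-u w) : ℝ) : ℂ)
        * (wderivZ (fun z => (β z : ℂ)) w - (β w : ℂ) * wderivZ (fun z => (u z : ℂ)) w) := by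
  have hneg : HasFDerivAt (fun z => -u z) (-(fderiv ℝ u w)) w := hu.hasFDerivAt.neg
  have hexp : HasFDerivAt (fun z => Real.exp (-u z))
      (Real.exp (-u w) • -(fderiv ℝ u w)) w := hneg.exp
  have hhalf : HasFDerivAt (fun z => (1 / 2 : ℝ) * Real.exp (-u z))
      ((1 / 2 : ℝ) • (Real.exp (-u w) • -(fderiv ℝ u w))) w := hexp.const_mul _
  have hC : HasFDerivAt (fun z => (1 / 2 : ℝ) * Real.exp (-u z) * β z)
      (((1 / 2 : ℝ) * Real.exp (-u w)) • (fderiv ℝ β w)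
        + β w • ((1 / 2 : ℝ) • (Real.exp (-u w) • -(fderiv ℝ u w)))) w :=
    hhalf.mul hb.hasFDerivAt
  have hCd := hC.differentiableAt
  have hCf := hC.fderiv
  unfold wderivZ
  rw [fderiv_ofReal_comp _ _ _ hCd, fderiv_ofReal_comp _ _ _ hCd,
      fderiv_ofReal_comp _ _ _ hb, fderiv_ofReal_comp _ _ _ hb,
      fderiv_ofReal_comp _ _ _ hu, fderiv_ofReal_comp _ _ _ hu, hCf]
  simp only [ContinuousLinearMap.add_apply, ContinuousLinearMap.smul_apply,
    ContinuousLinearMap.neg_apply, smul_eq_mul]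
  push_cast
  ring

lemma algclaim (L Ec Mc a ca A cA U cU B cB bc : ℂ)
    (hEM : Ec * Mc = 1)
    (h1 : Ec^2 = a*ca + bc^2)
    (h2 : (1/2)*ca*A + bc*B - U*Ec^2 = 0)
    (h2c : (1/2)*a*cA + bc*cB - cU*Ec^2 = 0) :
    (L*Ec*bc^2 - (1/4)*(A*cA)*Ec - (U*cU)*Ec*(a*ca)
      + (1/2)*A*cU*Ec*ca + (1/2)*cA*U*Ec*a + 2*bc^4) * (a*ca) * Ec^4
    = Ec^7*bc^2*((L + 2*Ec*Mc^2*bc^2)*(Mc^2*(a*ca))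
        - Mc^2*(B-bc*U)*(cB-bc*cU)) := by
  linear_combination
    (-2*Ec^4*a*ca*bc^4 + Ec^5*B*cB*bc^2 - Ec^5*cU*B*bc^3 - Ec^5*U*cB*bc^3
      + Ec^5*U*cU*bc^4 - 2*Ec^5*Mc*a*ca*bc^4 + Ec^6*Mc*B*cB*bc^2
      - Ec^6*Mc*cU*B*bc^3 - Ec^6*Mc*U*cB*bc^3 + Ec^6*Mc*U*cU*bc^4
      - 2*Ec^6*Mc^2*a*ca*bc^4 - 2*Ec^7*Mc^3*a*ca*bc^4
      - L*Ec^5*a*ca*bc^2 - L*Ec^6*Mc*a*ca*bc^2) * hEM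
    + (Ec^3*cB*bc^3 - Ec^3*cU*bc^4 - (1/2)*Ec^3*a^2*ca*cA + Ec^3*a^2*ca^2*cU) * h2
    + (-Ec*B*bc^5 - (1/2)*Ec*ca*A*bc^4 + Ec*a^2*ca^2*B*bc + (1/2)*Ec*a^2*ca^3*A
        + Ec^3*B*bc^3 - (1/2)*Ec^3*a*ca^2*A) * h2c
    + (-Ec*B*cB*bc^4 - (1/2)*Ec*ca*A*cB*bc^3 - (1/2)*Ec*a*cA*B*bc^3
        + Ec*a*ca*B*cB*bc^2 - (1/4)*Ec*a*ca*A*cA*bc^2 + (1/2)*Ec*a*ca^2*A*cB*bc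
        + (1/2)*Ec*a^2*ca*cA*B*bc + (1/4)*Ec*a^2*ca^2*A*cA
        + Ec^3*B*cB*bc^2 - (1/4)*Ec^3*a*ca*A*cA) * h1

theorem stmt5 (Ω : Set ℂ) (hΩ : IsOpen Ω)
    (u : ℂ → ℝ) (β : ℂ → ℝ) (α : ℂ → ℂ)
    (hu : ContDiffOn ℝ (⊤ : ℕ∞) u Ω)
    (hβ : ContDiffOn ℝ (⊤ : ℕ∞) β Ω)
    (hβpos : ∀ w ∈ Ω, 0 < β w)
    (hα : DifferentiableOn ℂ α Ω)
    (hα0 : ∀ w ∈ Ω, α w ≠ 0)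
    (h1 : ∀ w ∈ Ω, Real.exp (2 * u w) = ‖α w‖ ^ 2 + β w ^ 2)
    (h2 : ∀ w ∈ Ω,
      (1 / 2 : ℂ) * conj (α w) * wderivZ α w + (β w : ℂ) * wderivZ (fun z => (β z : ℂ)) w
        - wderivZ (fun z => (u z : ℂ)) w * (Real.exp (2 * u w) : ℂ) = 0) :
    -- `Ĉ := (1/2) e^{−u} β`, so `0 < Ĉ < 1/2` on `Ω`
    (∀ w ∈ Ω,
        wderivZbar (fun z => wderivZ (fun z' => (u z' : ℂ)) z) w * (Real.exp (u w) : ℂ)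
            * (β w : ℂ) ^ 2
          - (1 / 4 : ℂ) * (‖wderivZ α w‖ : ℂ) ^ 2 * (Real.exp (u w) : ℂ)
          - (‖wderivZ (fun z => (u z : ℂ)) w‖ : ℂ) ^ 2 * (Real.exp (u w) : ℂ)
            * (‖α w‖ : ℂ) ^ 2
          + (1 / 2 : ℂ) * wderivZ α w * wderivZbar (fun z => (u z : ℂ)) w
            * (Real.exp (u w) : ℂ) * conj (α w)
          + (1 / 2 : ℂ) * wderivZbar (fun z => conj (α z)) w * wderivZ (fun z => (u z : ℂ)) w
            * (Real.exp (u w) : ℂ) * α w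
          + 2 * (β w : ℂ) ^ 4 = 0)
    ↔
    (∀ w ∈ Ω,
        wderivZbar (fun z => wderivZ (fun z' => (u z' : ℂ)) z) w
          + 8 * (Real.exp (u w) : ℂ)
            * (((1 / 2 : ℝ) * Real.exp (-u w) * β w : ℝ) : ℂ) ^ 2
          - 4 * (‖wderivZ (fun z => (((1 / 2 : ℝ) * Real.exp (-u z) * β z : ℝ) : ℂ)) w‖ : ℂ) ^ 2
            / (1 - 4 * (((1 / 2 : ℝ) * Real.exp (-u w) * β w : ℝ) : ℂ) ^ 2) = 0) := by
  have main : ∀ w ∈ Ω,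
      (wderivZbar (fun z => wderivZ (fun z' => (u z' : ℂ)) z) w * (Real.exp (u w) : ℂ)
            * (β w : ℂ) ^ 2
          - (1 / 4 : ℂ) * (‖wderivZ α w‖ : ℂ) ^ 2 * (Real.exp (u w) : ℂ)
          - (‖wderivZ (fun z => (u z : ℂ)) w‖ : ℂ) ^ 2 * (Real.exp (u w) : ℂ)
            * (‖α w‖ : ℂ) ^ 2
          + (1 / 2 : ℂ) * wderivZ α w * wderivZbar (fun z => (u z : ℂ)) w
            * (Real.exp (u w) : ℂ) * conj (α w)
          + (1 / 2 : ℂ) * wderivZbar (fun z => conj (α z)) w * wderivZ (fun z => (u z : ℂ)) w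
            * (Real.exp (u w) : ℂ) * α w
          + 2 * (β w : ℂ) ^ 4 = 0)
      ↔ (wderivZbar (fun z => wderivZ (fun z' => (u z' : ℂ)) z) w
          + 8 * (Real.exp (u w) : ℂ)
            * (((1 / 2 : ℝ) * Real.exp (-u w) * β w : ℝ) : ℂ) ^ 2
          - 4 * (‖wderivZ (fun z => (((1 / 2 : ℝ) * Real.exp (-u z) * β z : ℝ) : ℂ)) w‖ : ℂ) ^ 2
            / (1 - 4 * (((1 / 2 : ℝ) * Real.exp (-u w) * β w : ℝ) : ℂ) ^ 2) = 0) := by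
    intro w hw
    -- differentiability
    have hud : DifferentiableAt ℝ u w :=
      (hu.contDiffAt (hΩ.mem_nhds hw)).differentiableAt (by simp)
    have hbd : DifferentiableAt ℝ β w :=
      (hβ.contDiffAt (hΩ.mem_nhds hw)).differentiableAt (by simp)
    -- atoms
    set Lv := wderivZbar (fun z => wderivZ (fun z' => (u z' : ℂ)) z) w with hLv
    set A := wderivZ α w with hA
    set U := wderivZ (fun z => (u z : ℂ)) w with hU
    set B := wderivZ (fun z => (β z : ℂ)) w with hB
    set a := α w with ha
    set Ec := ((Real.exp (u w) : ℝ) : ℂ) with hEc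
    set Mc := ((Real.exp (-u w) : ℝ) : ℂ) with hMc
    set bc := ((β w : ℝ) : ℂ) with hbc
    -- nonvanishing
    have hEne : Ec ≠ 0 := by
      simp [hEc, Complex.ofReal_ne_zero, Real.exp_ne_zero]
    have hMne : Mc ≠ 0 := by
      simp [hMc, Complex.ofReal_ne_zero, Real.exp_ne_zero]
    have hane : a ≠ 0 := hα0 w hw
    have hcane : conj a ≠ 0 := by simpa using hane
    have hbcne : bc ≠ 0 := by
      simp [hbc, Complex.ofReal_ne_zero]
      exact ne_of_gt (hβpos w hw)
    -- relations
    have hEM : Ec * Mc = 1 := by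
      rw [hEc, hMc, ← Complex.ofReal_mul, ← Real.exp_add]
      simp
    have hE2 : ((Real.exp (2 * u w) : ℝ) : ℂ) = Ec ^ 2 := by
      rw [hEc, ← Complex.ofReal_pow, two_mul, Real.exp_add]
      norm_num [pow_two]
    have h1' : Ec ^ 2 = a * conj a + bc ^ 2 := by
      have h := congrArg (fun t : ℝ => (t : ℂ)) (h1 w hw)
      simp only [Complex.ofReal_add, Complex.ofReal_pow] at h
      rw [hE2] at h
      rw [h, abs_sq_eq]
    have h2' : (1/2 : ℂ) * conj a * A + bc * B - U * Ec ^ 2 = 0 := by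
      have h := h2 w hw
      rw [hE2] at h
      exact h
    have hbcc : conj bc = bc := by rw [hbc]; exact Complex.conj_ofReal _
    have hEcc : conj Ec = Ec := by rw [hEc]; exact Complex.conj_ofReal _
    have h2c' : (1/2 : ℂ) * a * conj A + bc * conj B - conj U * Ec ^ 2 = 0 := by
      have hc := congrArg (starRingEnd ℂ) h2'
      simp only [map_sub, map_add, map_mul, map_pow, map_div₀, map_one, map_ofNat,
        map_zero, Complex.conj_conj, hbcc, hEcc] at hc
      linear_combination hc
    -- rewrite the Ĉ-cast and its z-derivative
    have hChat : ((((1 / 2 : ℝ) * Real.exp (-u w) * β w : ℝ)) : ℂ) = (1/2 : ℂ) * Mc * bc := by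
      push_cast [hMc, hbc]
      ring
    have hCz : wderivZ (fun z => (((1 / 2 : ℝ) * Real.exp (-u z) * β z : ℝ) : ℂ)) w
        = (1/2 : ℂ) * Mc * (B - bc * U) := by
      rw [wderivZ_chat u β w hud hbd, ← hB, ← hU]
      push_cast [hMc, hbc]
      ring
    -- Eq1 as a polynomial
    have hiff1 : (Lv * Ec * bc ^ 2
          - (1 / 4 : ℂ) * (‖A‖ : ℂ) ^ 2 * Ec
          - (‖U‖ : ℂ) ^ 2 * Ec * (‖a‖ : ℂ) ^ 2
          + (1 / 2 : ℂ) * A * wderivZbar (fun z => (u z : ℂ)) w * Ec * conj a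
          + (1 / 2 : ℂ) * wderivZbar (fun z => conj (α z)) w * U * Ec * a
          + 2 * bc ^ 4)
        = Lv * Ec * bc ^ 2 - (1/4 : ℂ) * (A * conj A) * Ec
          - (U * conj U) * Ec * (a * conj a)
          + (1/2 : ℂ) * A * conj U * Ec * conj a + (1/2 : ℂ) * conj A * U * Ec * a
          + 2 * bc ^ 4 := by
      rw [wderivZbar_ofReal u w hud, ← hU, wderivZbar_conj α w, ← hA,
        abs_sq_eq A, abs_sq_eq U, abs_sq_eq a]
    -- denominator
    have hden : (1 : ℂ) - 4 * ((1/2 : ℂ) * Mc * bc) ^ 2 = Mc ^ 2 * (a * conj a) := by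
      linear_combination Mc ^ 2 * h1' - (Ec * Mc + 1) * hEM
    have hdne : Mc ^ 2 * (a * conj a) ≠ 0 :=
      mul_ne_zero (pow_ne_zero 2 hMne) (mul_ne_zero hane hcane)
    -- Eq2 in cleared form
    have habsCz : ((‖(1/2 : ℂ) * Mc * (B - bc * U)‖ : ℝ) : ℂ) ^ 2
        = (1/4 : ℂ) * Mc ^ 2 * ((B - bc * U) * (conj B - bc * conj U)) := by
      rw [abs_sq_eq]
      simp only [map_mul, map_sub, Complex.conj_ofReal, map_div₀, map_one, map_ofNat,
        Complex.conj_conj]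
      rw [hMc, hbc]
      simp only [Complex.conj_ofReal]
      ring
    have hiff2 : (Lv + 8 * Ec * ((((1 / 2 : ℝ) * Real.exp (-u w) * β w : ℝ)) : ℂ) ^ 2
          - 4 * ((‖wderivZ (fun z => (((1 / 2 : ℝ) * Real.exp (-u z) * β z : ℝ) : ℂ)) w‖ : ℝ) : ℂ) ^ 2
            / (1 - 4 * ((((1 / 2 : ℝ) * Real.exp (-u w) * β w : ℝ)) : ℂ) ^ 2) = 0)
        ↔ ((Lv + 2 * Ec * Mc ^ 2 * bc ^ 2) * (Mc ^ 2 * (a * conj a))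
            - Mc ^ 2 * (B - bc * U) * (conj B - bc * conj U) = 0) := by
      rw [hChat, hCz, habsCz, hden]
      rw [sub_eq_zero]
      rw [eq_div_iff hdne]
      constructor
      · intro h
        linear_combination h
      · intro h
        linear_combination h
    rw [hiff1, hiff2]
    -- the key identity
    have key := algclaim Lv Ec Mc a (conj a) A (conj A) U (conj U) B (conj B) bc
      hEM h1' h2' h2c'
    constructor
    · intro h
      have h0 : Ec ^ 7 * bc ^ 2 * ((Lv + 2 * Ec * Mc ^ 2 * bc ^ 2) * (Mc ^ 2 * (a * conj a))
          - Mc ^ 2 * (B - bc * U) * (conj B - bc * conj U)) = 0 := by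
        rw [← key, h]
        ring
      have hne : Ec ^ 7 * bc ^ 2 ≠ 0 :=
        mul_ne_zero (pow_ne_zero 7 hEne) (pow_ne_zero 2 hbcne)
      exact (mul_eq_zero.mp h0).resolve_left hne
    · intro h
      have h0 : (Lv * Ec * bc ^ 2 - (1/4 : ℂ) * (A * conj A) * Ec
          - (U * conj U) * Ec * (a * conj a)
          + (1/2 : ℂ) * A * conj U * Ec * conj a + (1/2 : ℂ) * conj A * U * Ec * a
          + 2 * bc ^ 4) * ((a * conj a) * Ec ^ 4) = 0 := by
        rw [← mul_assoc, key, h]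
        ring
      have hne : (a * conj a) * Ec ^ 4 ≠ 0 :=
        mul_ne_zero (mul_ne_zero hane hcane) (pow_ne_zero 4 hEne)
      exact (mul_eq_zero.mp h0).resolve_right hne
  exact ⟨fun H w hw => (main w hw).mp (H w hw), fun H w hw => (main w hw).mpr (H w hw)⟩
end

section
/- Let Ω ⊆ ℂ be open and let u : Ω → ℝ and α, β : Ω → ℂ be smooth functions satisfying on Ω the structure equations: e^{2u} − ββ̄ = αᾱ; α_z̄ = 0; (1/2)ᾱ α_z + β̄ β_z − u_z e^{2u} = 0; and u_{zz̄} e^u |β|² − (1/4)|α_z|² e^u − |u_z|² e^u |α|² + (1/2)α_z u_z̄ e^u ᾱ + (1/2)(ᾱ)_z̄ u_z e^u α + 2|β|⁴ = 0. Then: (a) if α ≡ 0 on Ω, then u satisfies Liouville's equation u_{zz̄} + 2e^u = 0, so the Gauss curvature K := −e^{−u} u_{zz̄} of the metric 2e^u dz dz̄ is identically 2; (b) if β ≡ 0 on Ω, then α is nowhere vanishing, α_z = 2u_z α, and u_{zz̄} = 0, so K is identically 0. -/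
open Complex ComplexConjugate

lemma fderiv_apply_of_hasDerivAt {g : ℂ → ℂ} {w c v : ℂ} (h : HasDerivAt g c w) :
    fderiv ℝ g w v = v * c := by
  have hf := (h.hasFDerivAt.restrictScalars ℝ).fderiv
  rw [hf]
  simp [smul_eq_mul]

lemma wderivZ_of_hasDerivAt {g : ℂ → ℂ} {w c : ℂ} (h : HasDerivAt g c w) :
    wderivZ g w = c := by
  rw [wderivZ, fderiv_apply_of_hasDerivAt h, fderiv_apply_of_hasDerivAt h]
  have hii : Complex.I * Complex.I = -1 := Complex.I_mul_I
  field_simp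
  linear_combination (-c) * hii

lemma wderivZbar_of_hasDerivAt {g : ℂ → ℂ} {w c : ℂ} (h : HasDerivAt g c w) :
    wderivZbar g w = 0 := by
  rw [wderivZbar, fderiv_apply_of_hasDerivAt h, fderiv_apply_of_hasDerivAt h]
  have hii : Complex.I * Complex.I = -1 := Complex.I_mul_I
  field_simp
  linear_combination c * hii

lemma wderivZ_congr {f g : ℂ → ℂ} {w : ℂ} (h : f =ᶠ[nhds w] g) :
    wderivZ f w = wderivZ g w := by
  rw [wderivZ, wderivZ, h.fderiv_eq]

lemma wderivZbar_congr {f g : ℂ → ℂ} {w : ℂ} (h : f =ᶠ[nhds w] g) :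
    wderivZbar f w = wderivZbar g w := by
  rw [wderivZbar, wderivZbar, h.fderiv_eq]

lemma wderivZ_of_eventually_zero {f : ℂ → ℂ} {w : ℂ} (h : f =ᶠ[nhds w] fun _ => 0) :
    wderivZ f w = 0 := by
  rw [wderivZ_congr h, wderivZ, fderiv_fun_const]
  simp

lemma wderivZbar_of_eventually_zero {f : ℂ → ℂ} {w : ℂ} (h : f =ᶠ[nhds w] fun _ => 0) :
    wderivZbar f w = 0 := by
  rw [wderivZbar_congr h, wderivZbar, fderiv_fun_const]
  simp

/-- Cauchy–Riemann: real-differentiable with vanishing `∂/∂z̄` implies ℂ-differentiable. -/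
lemma differentiableAt_complex_of_wderivZbar {f : ℂ → ℂ} {w : ℂ}
    (hd : DifferentiableAt ℝ f w) (h : wderivZbar f w = 0) :
    DifferentiableAt ℂ f w := by
  rw [differentiableAt_iff_restrictScalars ℝ hd]
  refine ⟨ContinuousLinearMap.smulRight (1 : ℂ →L[ℂ] ℂ) (fderiv ℝ f w 1), ?_⟩
  have hI : fderiv ℝ f w Complex.I = Complex.I * fderiv ℝ f w 1 := by
    rw [wderivZbar] at h
    have h2 : fderiv ℝ f w 1 + Complex.I * fderiv ℝ f w Complex.I = 0 := by
      linear_combination 2 * h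
    have hii : Complex.I * Complex.I = -1 := Complex.I_mul_I
    linear_combination (-Complex.I) * h2 + (fderiv ℝ f w Complex.I) * hii
  ext v
  have hv : v = v.re • (1 : ℂ) + v.im • Complex.I := by
    simp [Complex.real_smul]
  calc (ContinuousLinearMap.smulRight (1 : ℂ →L[ℂ] ℂ)
        (fderiv ℝ f w 1)).restrictScalars ℝ v
      = v * fderiv ℝ f w 1 := by simp [smul_eq_mul]
    _ = v.re • fderiv ℝ f w 1 + v.im • (Complex.I * fderiv ℝ f w 1) := by
        rw [Complex.real_smul, Complex.real_smul]
        nth_rewrite 1 [hv]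
        rw [Complex.real_smul, Complex.real_smul]
        ring
    _ = fderiv ℝ f w (v.re • (1 : ℂ) + v.im • Complex.I) := by
        rw [map_add, map_smul, map_smul, hI]
    _ = fderiv ℝ f w v := by rw [← hv]

theorem stmt17 (Ω : Set ℂ) (hΩ : IsOpen Ω)
    (u : ℂ → ℝ) (α β : ℂ → ℂ)
    (hu : ContDiffOn ℝ (⊤ : ℕ∞) u Ω)
    (hα : ContDiffOn ℝ (⊤ : ℕ∞) α Ω)
    (hβ : ContDiffOn ℝ (⊤ : ℕ∞) β Ω)
    (h1 : ∀ w ∈ Ω, (Real.exp (2 * u w) : ℂ) - β w * conj (β w) = α w * conj (α w))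
    (h2 : ∀ w ∈ Ω, wderivZbar α w = 0)
    (h3 : ∀ w ∈ Ω,
      (1 / 2 : ℂ) * conj (α w) * wderivZ α w + conj (β w) * wderivZ β w
        - wderivZ (fun z => (u z : ℂ)) w * (Real.exp (2 * u w) : ℂ) = 0)
    (h4 : ∀ w ∈ Ω,
      wderivZbar (fun z => wderivZ (fun z' => (u z' : ℂ)) z) w * (Real.exp (u w) : ℂ)
          * (‖β w‖ : ℂ) ^ 2
        - (1 / 4 : ℂ) * (‖wderivZ α w‖ : ℂ) ^ 2 * (Real.exp (u w) : ℂ)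
        - (‖wderivZ (fun z => (u z : ℂ)) w‖ : ℂ) ^ 2 * (Real.exp (u w) : ℂ)
          * (‖α w‖ : ℂ) ^ 2
        + (1 / 2 : ℂ) * wderivZ α w * wderivZbar (fun z => (u z : ℂ)) w
          * (Real.exp (u w) : ℂ) * conj (α w)
        + (1 / 2 : ℂ) * wderivZbar (fun z => conj (α z)) w * wderivZ (fun z => (u z : ℂ)) w
          * (Real.exp (u w) : ℂ) * α w
        + 2 * (‖β w‖ : ℂ) ^ 4 = 0) :
    -- (a) the totally geodesic Lagrangian sphere: `α ≡ 0`
    ((∀ w ∈ Ω, α w = 0) → ∀ w ∈ Ω,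
      wderivZbar (fun z => wderivZ (fun z' => (u z' : ℂ)) z) w
          + 2 * (Real.exp (u w) : ℂ) = 0 ∧
      -(Real.exp (-u w) : ℂ) * wderivZbar (fun z => wderivZ (fun z' => (u z' : ℂ)) z) w = 2) ∧
    -- (b) the totally geodesic flat Lagrangian torus: `β ≡ 0`
    ((∀ w ∈ Ω, β w = 0) → ∀ w ∈ Ω,
      α w ≠ 0 ∧
      wderivZ α w = 2 * wderivZ (fun z => (u z : ℂ)) w * α w ∧
      wderivZbar (fun z => wderivZ (fun z' => (u z' : ℂ)) z) w = 0 ∧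
      -(Real.exp (-u w) : ℂ) * wderivZbar (fun z => wderivZ (fun z' => (u z' : ℂ)) z) w = 0) := by
  constructor
  · -- case (a)
    intro hα0 w hw
    have hmem : Ω ∈ nhds w := hΩ.mem_nhds hw
    have hev : α =ᶠ[nhds w] fun _ => 0 :=
      Filter.eventuallyEq_of_mem hmem hα0
    have hevc : (fun z => conj (α z)) =ᶠ[nhds w] fun _ => 0 := by
      filter_upwards [hev] with z hz; simp [hz]
    have hZα : wderivZ α w = 0 := wderivZ_of_eventually_zero hev
    have hZbc : wderivZbar (fun z => conj (α z)) w = 0 := wderivZbar_of_eventually_zero hevc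
    set E : ℂ := (Real.exp (u w) : ℂ) with hE
    have hE0 : E ≠ 0 := Complex.ofReal_ne_zero.mpr (Real.exp_ne_zero _)
    have hr : Real.exp (2 * u w) = Complex.normSq (β w) := by
      have h1' := h1 w hw
      rw [hα0 w hw] at h1'
      simp only [map_zero, mul_zero, Complex.mul_conj, sub_eq_zero] at h1'
      exact_mod_cast h1'
    have habs2 : ‖β w‖ ^ 2 = (Real.exp (u w)) ^ 2 := by
      rw [Complex.sq_norm, ← hr, two_mul, Real.exp_add, pow_two]
    have hB2 : (‖β w‖ : ℂ) ^ 2 = E ^ 2 := by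
      rw [hE, ← Complex.ofReal_pow, ← Complex.ofReal_pow, habs2]
    have hB4 : (‖β w‖ : ℂ) ^ 4 = E ^ 4 := by
      have : (‖β w‖ : ℂ) ^ 4 = ((‖β w‖ : ℂ) ^ 2) ^ 2 := by ring
      rw [this, hB2]; ring
    have h4' := h4 w hw
    rw [hZα, hZbc, hα0 w hw, hB2, hB4, ← hE] at h4'
    simp only [map_zero, Complex.ofReal_zero, mul_zero, zero_mul, sub_zero, add_zero,
      zero_add, norm_zero] at h4'
    set X := wderivZbar (fun z => wderivZ (fun z' => (u z' : ℂ)) z) w with hX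
    have key : X + 2 * E = 0 := by
      have hE3 : E ^ 3 ≠ 0 := pow_ne_zero _ hE0
      have hz : (X + 2 * E) * E ^ 3 = 0 := by linear_combination h4'
      exact (mul_eq_zero.mp hz).resolve_right hE3
    refine ⟨key, ?_⟩
    have hXval : X = -2 * E := by linear_combination key
    rw [hXval, hE]
    have hone : (Real.exp (-u w) : ℂ) * (Real.exp (u w) : ℂ) = 1 := by
      rw [← Complex.ofReal_mul, ← Real.exp_add]
      norm_num
    linear_combination (2 : ℂ) * hone
  · -- case (b)
    intro hβ0 w hw
    have hmem : Ω ∈ nhds w := hΩ.mem_nhds hw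
    have hexp : ∀ z ∈ Ω, α z * conj (α z) = (Real.exp (2 * u z) : ℂ) := by
      intro z hz
      have h1' := h1 z hz
      rw [hβ0 z hz] at h1'
      simpa using h1'.symm
    have hαne : ∀ z ∈ Ω, α z ≠ 0 := by
      intro z hz h0
      have hez := hexp z hz
      rw [h0] at hez
      simp only [map_zero, zero_mul] at hez
      exact Complex.ofReal_ne_zero.mpr (Real.exp_ne_zero _) hez.symm
    -- α' = 2 u_z α on Ω
    have hαzAll : ∀ z ∈ Ω,
        wderivZ α z = 2 * wderivZ (fun z' => (u z' : ℂ)) z * α z := by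
      intro z hz
      have h3z := h3 z hz
      rw [hβ0 z hz] at h3z
      simp only [map_zero, zero_mul, add_zero] at h3z
      have hez := hexp z hz
      have hcne : conj (α z) ≠ 0 := by simpa using hαne z hz
      refine mul_right_cancel₀ hcne ?_
      rw [← hez] at h3z
      linear_combination 2 * h3z
    -- α is complex differentiable on Ω
    have hαC : ∀ z ∈ Ω, DifferentiableAt ℂ α z := by
      intro z hz
      have hd : DifferentiableAt ℝ α z :=
        (hα.contDiffAt (hΩ.mem_nhds hz)).differentiableAt (by simp)
      exact differentiableAt_complex_of_wderivZbar hd (h2 z hz)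
    have hαO : DifferentiableOn ℂ α Ω := fun z hz => (hαC z hz).differentiableWithinAt
    have hαan : AnalyticOnNhd ℂ α Ω := hαO.analyticOnNhd hΩ
    have hderivα : ∀ z ∈ Ω, DifferentiableAt ℂ (deriv α) z := fun z hz =>
      ((hαan.deriv) z hz).differentiableAt
    have hZαderiv : ∀ z ∈ Ω, wderivZ α z = deriv α z := fun z hz =>
      wderivZ_of_hasDerivAt (hαC z hz).hasDerivAt
    refine ⟨hαne w hw, hαzAll w hw, ?_⟩
    -- u_z agrees on Ω with the holomorphic function (deriv α)/(2α)
    have hUeq : ∀ z ∈ Ω, wderivZ (fun z' => (u z' : ℂ)) z = deriv α z / (2 * α z) := by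
      intro z hz
      have hne : α z ≠ 0 := hαne z hz
      rw [← hZαderiv z hz, hαzAll z hz]
      field_simp
    have hev : (fun z => wderivZ (fun z' => (u z' : ℂ)) z)
        =ᶠ[nhds w] fun z => deriv α z / (2 * α z) :=
      Filter.eventuallyEq_of_mem hmem hUeq
    have hH : DifferentiableAt ℂ (fun z => deriv α z / (2 * α z)) w :=
      (hderivα w hw).div ((differentiableAt_const (2:ℂ)).mul (hαC w hw))
        (by simpa using hαne w hw)
    have hfinal : wderivZbar (fun z => wderivZ (fun z' => (u z' : ℂ)) z) w = 0 := by
      rw [wderivZbar_congr hev]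
      exact wderivZbar_of_hasDerivAt hH.hasDerivAt
    exact ⟨hfinal, by rw [hfinal]; ring⟩
end
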